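/- Let A > 0, φ₁ ∈ ℝ, and let (x,t) ∈ ℝ² be such that E := e^{−Ax − iA²t + iφ₁} ≠ 1. Define v₁ = (A/(2i))·1/(1 − E) and the matrix-valued function of k: M(k) = [[(k + v₁)/(k − iA/2), v₁/k],[−w/(k − iA/2), (k − w)/k]], where w := conj(v₁(−x,t)) with v₁(−x,t) = (A/(2i))·1/(1 − e^{Ax − iA²t + iφ₁}). Then: (a) det M(k) = 1 for all k ∉ {0, iA/2}; (b) lim_{k → iA/2} (k − iA/2)·(first column of M(k)) = c₁ · (second column of M evaluated at k = iA/2), where c₁ = (iA/2)·e^{iφ₁}·e^{−Ax − iA²t}; (c) lim_{k → 0} k·(second column of M(k)) = (A/(2i)) · (first column of M evaluated at k = 0); (d) 2i·lim_{k → ∞} k·M₁₂(k) = A/(1 − E). -/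

import Mathlib

open Complex Matrix Filter Topology

/-- E = e^{−Ax − iA²t + iφ₁}. -/
noncomputable def solitonE (A φ₁ x t : ℝ) : ℂ :=
  Complex.exp (-(A : ℂ) * x - I * (A : ℂ) ^ 2 * t + I * φ₁)

/-- v₁(x,t) = (A/2i)·1/(1 − E). -/
noncomputable def solV₁ (A φ₁ x t : ℝ) : ℂ :=
  ((A : ℂ) / (2 * I)) * (1 - solitonE A φ₁ x t)⁻¹

/-- The explicit solution M(x,t,k) of the RH problem for the one-soliton solution:
M(k) = [[(k + v₁)/(k − iA/2), v₁/k],[−w/(k − iA/2), (k − w)/k]] with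
w = conj(v₁(−x,t)). -/
noncomputable def solM (A φ₁ x t : ℝ) (k : ℂ) : Matrix (Fin 2) (Fin 2) ℂ :=
  !![(k + solV₁ A φ₁ x t) / (k - I * A / 2),
     solV₁ A φ₁ x t / k;
     -((starRingEnd ℂ) (solV₁ A φ₁ (-x) t)) / (k - I * A / 2),
     (k - (starRingEnd ℂ) (solV₁ A φ₁ (-x) t)) / k]

lemma solM00 (A φ₁ x t : ℝ) (k : ℂ) :
    solM A φ₁ x t k 0 0 = (k + solV₁ A φ₁ x t) / (k - I * A / 2) := by simp [solM]

lemma solM01 (A φ₁ x t : ℝ) (k : ℂ) :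
    solM A φ₁ x t k 0 1 = solV₁ A φ₁ x t / k := by simp [solM]

lemma solM10 (A φ₁ x t : ℝ) (k : ℂ) :
    solM A φ₁ x t k 1 0 = -((starRingEnd ℂ) (solV₁ A φ₁ (-x) t)) / (k - I * A / 2) := by
  simp [solM]

lemma solM11 (A φ₁ x t : ℝ) (k : ℂ) :
    solM A φ₁ x t k 1 1 = (k - (starRingEnd ℂ) (solV₁ A φ₁ (-x) t)) / k := by simp [solM]

/-- Properties of the explicit one-soliton RH solution: unit determinant, the residue
conditions at k = iA/2 and k = 0, and the reconstruction formula
2i·lim_{k→∞} k M₁₂(k) = A/(1 − E). -/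
theorem one_soliton_rh_solution (A φ₁ : ℝ) (hA : 0 < A) (x t : ℝ)
    (hE : solitonE A φ₁ x t ≠ 1) :
    (∀ k : ℂ, k ≠ 0 → k ≠ I * A / 2 → (solM A φ₁ x t k).det = 1) ∧
    (∀ i : Fin 2,
      Tendsto (fun k : ℂ => (k - I * A / 2) * solM A φ₁ x t k i 0)
        (𝓝[≠] (I * A / 2))
        (𝓝 ((I * A / 2) * Complex.exp (I * φ₁)
              * Complex.exp (-(A : ℂ) * x - I * (A : ℂ) ^ 2 * t)
            * solM A φ₁ x t (I * A / 2) i 1))) ∧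
    (∀ i : Fin 2,
      Tendsto (fun k : ℂ => k * solM A φ₁ x t k i 1) (𝓝[≠] (0 : ℂ))
        (𝓝 (((A : ℂ) / (2 * I)) * solM A φ₁ x t 0 i 0))) ∧
    Tendsto (fun k : ℂ => 2 * I * (k * solM A φ₁ x t k 0 1)) (Bornology.cobounded ℂ)
      (𝓝 ((A : ℂ) / (1 - solitonE A φ₁ x t))) := by
  have hA0 : (A:ℂ) ≠ 0 := Complex.ofReal_ne_zero.mpr hA.ne'
  have hc : I * (A:ℂ) / 2 ≠ 0 := by
    simp [Complex.I_ne_zero, hA0]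
  have hE0 : solitonE A φ₁ x t ≠ 0 := Complex.exp_ne_zero _
  have h1E : (1:ℂ) - solitonE A φ₁ x t ≠ 0 := sub_ne_zero.mpr (Ne.symm hE)
  have hconjE : (starRingEnd ℂ) (solitonE A φ₁ (-x) t) = (solitonE A φ₁ x t)⁻¹ := by
    unfold solitonE
    rw [← Complex.exp_conj, ← Complex.exp_neg]
    congr 1
    simp only [map_add, map_sub, map_neg, _root_.map_mul, map_pow, Complex.conj_I,
      Complex.conj_ofReal]
    push_cast
    ring
  have hv : solV₁ A φ₁ x t = -(I * (A:ℂ)/2) * (1 - solitonE A φ₁ x t)⁻¹ := by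
    unfold solV₁
    congr 1
    field_simp
    linear_combination Complex.I_sq
  have hw : (starRingEnd ℂ) (solV₁ A φ₁ (-x) t)
      = -(I*(A:ℂ)/2) * solitonE A φ₁ x t * (1 - solitonE A φ₁ x t)⁻¹ := by
    unfold solV₁
    rw [_root_.map_mul, map_inv₀, map_sub, _root_.map_one, hconjE, map_div₀, _root_.map_mul]
    simp only [Complex.conj_ofReal, Complex.conj_I, map_ofNat]
    have hE1 : solitonE A φ₁ x t - 1 ≠ 0 := sub_ne_zero.mpr hE
    field_simp
    linear_combination (solitonE A φ₁ x t - 1) * Complex.I_sq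
  have hEE : Complex.exp (I * φ₁) * Complex.exp (-(A:ℂ)*x - I*(A:ℂ)^2*t)
      = solitonE A φ₁ x t := by
    rw [← Complex.exp_add]
    unfold solitonE
    congr 1
    ring
  have hs : (1 - solitonE A φ₁ x t) * (1 - solitonE A φ₁ x t)⁻¹ = 1 := mul_inv_cancel₀ h1E
  have hci : (I * (A:ℂ) / 2) * (I * (A:ℂ) / 2)⁻¹ = 1 := mul_inv_cancel₀ hc
  have hvw : solV₁ A φ₁ x t - (starRingEnd ℂ) (solV₁ A φ₁ (-x) t) = -(I * (A:ℂ) / 2) := by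
    rw [hv, hw]
    linear_combination (-(I * (A:ℂ) / 2)) * mul_inv_cancel₀ h1E
  refine ⟨?_, ?_, ?_, ?_⟩
  · -- determinant
    intro k hk0 hkc
    have hkc' : k - I * A / 2 ≠ 0 := sub_ne_zero.mpr hkc
    rw [solM, Matrix.det_fin_two_of]
    rw [div_mul_div_comm, div_mul_div_comm,
      div_sub_div _ _ (mul_ne_zero hkc' hk0) (mul_ne_zero hk0 hkc'),
      div_eq_one_iff_eq (mul_ne_zero (mul_ne_zero hkc' hk0) (mul_ne_zero hk0 hkc'))]
    linear_combination (k^2*(k - I * (A:ℂ)/2)) * hvw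
  · -- residue at iA/2
    intro i
    fin_cases i
    · have htend : Tendsto (fun k : ℂ => k + solV₁ A φ₁ x t) (𝓝[≠] (I * A / 2))
          (𝓝 (I * A / 2 + solV₁ A φ₁ x t)) :=
        ((continuous_id.add continuous_const).tendsto _).mono_left nhdsWithin_le_nhds
      have heq : (fun k : ℂ => k + solV₁ A φ₁ x t)
          =ᶠ[𝓝[≠] (I * A / 2)] (fun k : ℂ => (k - I * A / 2) * solM A φ₁ x t k 0 0) := by
        filter_upwards [self_mem_nhdsWithin] with k hk
        rw [solM00, mul_div_cancel₀ _ (sub_ne_zero.mpr hk)]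
      have h2 := htend.congr' heq
      simp only [Fin.isValue, Fin.zero_eta, Fin.mk_one]
      convert h2 using 2
      rw [solM01, hv]
      linear_combination
        (-(I * (A:ℂ)/2) * (1 - solitonE A φ₁ x t)⁻¹ * Complex.exp (I*(φ₁:ℂ))
          * Complex.exp (-(A:ℂ)*x - I*(A:ℂ)^2*t)) * hci
        + (-(I * (A:ℂ)/2) * (1 - solitonE A φ₁ x t)⁻¹) * hEE
        + (I * (A:ℂ)/2) * hs
    · have htend : Tendsto (fun _ : ℂ => -((starRingEnd ℂ) (solV₁ A φ₁ (-x) t)))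
          (𝓝[≠] (I * A / 2)) (𝓝 (-((starRingEnd ℂ) (solV₁ A φ₁ (-x) t)))) :=
        tendsto_const_nhds
      have heq : (fun _ : ℂ => -((starRingEnd ℂ) (solV₁ A φ₁ (-x) t)))
          =ᶠ[𝓝[≠] (I * A / 2)] (fun k : ℂ => (k - I * A / 2) * solM A φ₁ x t k 1 0) := by
        filter_upwards [self_mem_nhdsWithin] with k hk
        rw [solM10, mul_div_cancel₀ _ (sub_ne_zero.mpr hk)]
      have h2 := htend.congr' heq
      simp only [Fin.isValue, Fin.zero_eta, Fin.mk_one]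
      convert h2 using 2
      rw [solM11, hw]
      linear_combination
        ((I*(A:ℂ)/2) * (1 + solitonE A φ₁ x t * (1 - solitonE A φ₁ x t)⁻¹)
          * Complex.exp (I*(φ₁:ℂ)) * Complex.exp (-(A:ℂ)*x - I*(A:ℂ)^2*t)) * hci
        + ((I*(A:ℂ)/2) * (1 + solitonE A φ₁ x t * (1 - solitonE A φ₁ x t)⁻¹)) * hEE
        + (-(I*(A:ℂ)/2) * solitonE A φ₁ x t) * hs
  · -- residue at 0
    intro i
    fin_cases i
    · have htend : Tendsto (fun _ : ℂ => solV₁ A φ₁ x t) (𝓝[≠] (0:ℂ))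
          (𝓝 (solV₁ A φ₁ x t)) := tendsto_const_nhds
      have heq : (fun _ : ℂ => solV₁ A φ₁ x t)
          =ᶠ[𝓝[≠] (0:ℂ)] (fun k : ℂ => k * solM A φ₁ x t k 0 1) := by
        filter_upwards [self_mem_nhdsWithin] with k hk
        rw [solM01, mul_div_cancel₀ _ hk]
      have h2 := htend.congr' heq
      simp only [Fin.isValue, Fin.zero_eta, Fin.mk_one]
      convert h2 using 2
      rw [solM00, hv]
      have h0c : (0:ℂ) - I * A / 2 ≠ 0 := by simpa using hc
      field_simp [h1E, h0c]
      linear_combination (-(A:ℂ)*I) * Complex.I_sq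
    · have htend : Tendsto (fun k : ℂ => k - (starRingEnd ℂ) (solV₁ A φ₁ (-x) t))
          (𝓝[≠] (0:ℂ)) (𝓝 ((0:ℂ) - (starRingEnd ℂ) (solV₁ A φ₁ (-x) t))) :=
        ((continuous_id.sub continuous_const).tendsto _).mono_left nhdsWithin_le_nhds
      have heq : (fun k : ℂ => k - (starRingEnd ℂ) (solV₁ A φ₁ (-x) t))
          =ᶠ[𝓝[≠] (0:ℂ)] (fun k : ℂ => k * solM A φ₁ x t k 1 1) := by
        filter_upwards [self_mem_nhdsWithin] with k hk
        rw [solM11, mul_div_cancel₀ _ hk]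
      have h2 := htend.congr' heq
      simp only [Fin.isValue, Fin.zero_eta, Fin.mk_one]
      convert h2 using 2
      rw [solM10, hw]
      have h0c : (0:ℂ) - I * A / 2 ≠ 0 := by simpa using hc
      field_simp [h1E, h0c]
      linear_combination ((A:ℂ)^2 * solitonE A φ₁ x t) * Complex.I_sq
  · -- reconstruction
    have htend : Tendsto (fun _ : ℂ => 2 * I * solV₁ A φ₁ x t) (Bornology.cobounded ℂ)
        (𝓝 (2 * I * solV₁ A φ₁ x t)) := tendsto_const_nhds
    have heq : (fun _ : ℂ => 2 * I * solV₁ A φ₁ x t)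
        =ᶠ[Bornology.cobounded ℂ] (fun k : ℂ => 2 * I * (k * solM A φ₁ x t k 0 1)) := by
      filter_upwards [Bornology.eventually_ne_cobounded (0:ℂ)] with k hk
      rw [solM01, mul_div_cancel₀ _ hk]
    have h2 := htend.congr' heq
    convert h2 using 2
    unfold solV₁
    field_simp
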